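/- Let {λ_n} be a nondecreasing sequence of nonnegative reals with Σ_n e^{−λ_n t} < ∞ for every t > 0, let μ be the counting measure μ(X) = #{n : λ_n ∈ X} on [0,∞), and let N(λ) = μ([0,λ]). If the Laplace transform satisfies μ̂(t) = Σ_n e^{−λ_n t} ∼ A t^{−γ} as t → 0⁺ for constants A > 0, γ > 0, then N(λ) ∼ (A/Γ(γ+1)) λ^γ as λ → ∞. -/

import Mathlib

open Filter
noncomputable section

open MeasureTheory Real Polynomial

set_option maxHeartbeats 2000000

lemma kar_lam_tendsto (lam : ℕ → ℝ) (hs : Summable fun n => Real.exp (-lam n)) :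
    Tendsto lam atTop atTop := by
  have h0 : Tendsto (fun n => Real.exp (-lam n)) atTop (nhds 0) := hs.tendsto_atTop_zero
  have := Real.tendsto_exp_comp_nhds_zero.mp h0
  simpa using tendsto_neg_atBot_iff.mp this

lemma kar_fin (lam : ℕ → ℝ) (hs : Summable fun n => Real.exp (-lam n)) (x : ℝ) :
    {n : ℕ | lam n ≤ x}.Finite := by
  obtain ⟨N, hN⟩ := (eventually_atTop).mp ((kar_lam_tendsto lam hs).eventually_gt_atTop x)
  refine (Set.finite_Iio N).subset fun n hn => ?_
  by_contra h
  exact absurd (hN n (not_lt.mp h)) (not_lt.mpr hn)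
lemma kar_card (lam : ℕ → ℝ) (x : ℝ) (hfin : {n : ℕ | lam n ≤ x}.Finite) :
    (Nat.card {n : ℕ | lam n ≤ x} : ℝ) = ∑' n, (if lam n ≤ x then (1:ℝ) else 0) := by
  rw [tsum_eq_sum (s := hfin.toFinset) (fun n hn => by
    simp only [Set.Finite.mem_toFinset, Set.mem_setOf_eq] at hn; simp [hn])]
  rw [Nat.card_coe_set_eq, Set.ncard_eq_toFinset_card _ hfin]
  rw [Finset.sum_congr rfl (g := fun _ => (1:ℝ)) (fun n hn => by simp only [Set.Finite.mem_toFinset, Set.mem_setOf_eq] at hn; simp [hn])]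
  simp

lemma kar_scaled (lam : ℕ → ℝ) (A γ : ℝ) (hγ : 0 < γ)
    (hasymp : Tendsto (fun t : ℝ => (∑' n, Real.exp (-lam n * t)) * t ^ γ)
      (nhdsWithin 0 (Set.Ioi 0)) (nhds A)) (k : ℕ) (hk : 0 < k) :
    Tendsto (fun t : ℝ => (∑' n, Real.exp (-lam n * (k * t))) * t ^ γ)
      (nhdsWithin 0 (Set.Ioi 0)) (nhds (A * (k:ℝ) ^ (-γ))) := by
  have hk' : (0:ℝ) < k := Nat.cast_pos.mpr hk
  have hmap : Tendsto (fun t : ℝ => (k:ℝ) * t) (nhdsWithin 0 (Set.Ioi 0)) (nhdsWithin 0 (Set.Ioi 0)) := by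
    apply tendsto_nhdsWithin_of_tendsto_nhds_of_eventually_within
    · simpa using (continuous_mul_left (k:ℝ)).tendsto' 0 0 (by simp) |>.mono_left nhdsWithin_le_nhds
    · filter_upwards [self_mem_nhdsWithin] with t ht
      exact mul_pos hk' ht
  have h1 := (hasymp.comp hmap).mul_const ((k:ℝ) ^ (-γ))
  refine h1.congr' ?_
  filter_upwards [self_mem_nhdsWithin] with t (ht : 0 < t)
  simp only [Function.comp]
  rw [Real.mul_rpow hk'.le ht.le, Real.rpow_neg hk'.le]
  have hkγ : ((k:ℝ) ^ γ) ≠ 0 := (Real.rpow_pos_of_pos hk' γ).ne'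
  simp only [neg_mul]
  field_simp
  ring_nf
  exact tsum_congr fun n => by ring_nf

lemma kar_polylim (lam : ℕ → ℝ) (A γ : ℝ) (hγ : 0 < γ)
    (hasymp : Tendsto (fun t : ℝ => (∑' n, Real.exp (-lam n * t)) * t ^ γ)
      (nhdsWithin 0 (Set.Ioi 0)) (nhds A)) (F : Finset ℕ) (hF : ∀ k ∈ F, 0 < k) (a : ℕ → ℝ) :
    Tendsto (fun t : ℝ => (∑ k ∈ F, a k * (∑' n, Real.exp (-lam n * (k * t)))) * t ^ γ)
      (nhdsWithin 0 (Set.Ioi 0)) (nhds (A * ∑ k ∈ F, a k * (k:ℝ) ^ (-γ))) := by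
  have h1 : Tendsto (fun t : ℝ => ∑ k ∈ F, a k * ((∑' n, Real.exp (-lam n * (k * t))) * t ^ γ))
      (nhdsWithin 0 (Set.Ioi 0)) (nhds (∑ k ∈ F, a k * (A * (k:ℝ) ^ (-γ)))) :=
    tendsto_finset_sum _ fun k hk => (kar_scaled lam A γ hγ hasymp k (hF k hk)).const_mul _
  have hlim : (∑ k ∈ F, a k * (A * (k:ℝ) ^ (-γ))) = A * ∑ k ∈ F, a k * (k:ℝ) ^ (-γ) := by
    rw [Finset.mul_sum]; exact Finset.sum_congr rfl fun k _ => by ring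
  rw [← hlim]
  refine h1.congr fun t => ?_
  rw [Finset.sum_mul]
  exact Finset.sum_congr rfl fun k _ => by ring

lemma kar_eval_repr' (q : ℝ[X]) (v : ℝ) :
    q.eval (Real.exp (-v)) = ∑ k ∈ q.support, q.coeff k * Real.exp (-((k:ℝ) * v)) := by
  rw [Polynomial.eval_eq_sum, Polynomial.sum_def]
  refine Finset.sum_congr rfl fun k _ => ?_
  rw [← Real.exp_nat_mul]
  ring_nf

lemma kar_eval_repr (q : ℝ[X]) (lam : ℕ → ℝ) (t : ℝ) (n : ℕ) :
    q.eval (Real.exp (-lam n * t)) = ∑ k ∈ q.support, q.coeff k * Real.exp (-lam n * (k * t)) := by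
  rw [show -lam n * t = -(lam n * t) by ring, kar_eval_repr' q (lam n * t)]
  exact Finset.sum_congr rfl fun k _ => by ring_nf

lemma kar_supp_pos (q : ℝ[X]) (hq : q.coeff 0 = 0) : ∀ k ∈ q.support, 0 < k := by
  intro k hk
  rcases Nat.eq_zero_or_pos k with h | h
  · subst h; exact absurd hq (Polynomial.mem_support_iff.mp hk)
  · exact h

lemma kar_summable_poly (lam : ℕ → ℝ)
    (hsum : ∀ t > (0 : ℝ), Summable fun n => Real.exp (-lam n * t))
    (q : ℝ[X]) (hq : q.coeff 0 = 0) {t : ℝ} (ht : 0 < t) :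
    Summable fun n => q.eval (Real.exp (-lam n * t)) := by
  refine (summable_sum fun k hk => ?_).congr fun n => (kar_eval_repr q lam t n).symm
  exact (hsum ((k:ℝ) * t) (mul_pos (Nat.cast_pos.mpr (kar_supp_pos q hq k hk)) ht)).mul_left _

lemma kar_tsum_poly (lam : ℕ → ℝ)
    (hsum : ∀ t > (0 : ℝ), Summable fun n => Real.exp (-lam n * t))
    (q : ℝ[X]) (hq : q.coeff 0 = 0) {t : ℝ} (ht : 0 < t) :
    ∑' n, q.eval (Real.exp (-lam n * t))
      = ∑ k ∈ q.support, q.coeff k * (∑' n, Real.exp (-lam n * (k * t))) := by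
  rw [tsum_congr (kar_eval_repr q lam t),
    Summable.tsum_finsetSum (f := fun (k : ℕ) (n : ℕ) => q.coeff k * Real.exp (-lam n * (k * t)))
      (fun k hk =>
        (hsum ((k:ℝ) * t) (mul_pos (Nat.cast_pos.mpr (kar_supp_pos q hq k hk)) ht)).mul_left _)]
  exact Finset.sum_congr rfl fun k _ => tsum_mul_left

lemma kar_int_term (γ : ℝ) (hγ : 0 < γ) (k : ℕ) (hk : 0 < k) :
    IntegrableOn (fun u : ℝ => u ^ (γ-1) * Real.exp (-((k:ℝ) * u))) (Set.Ioi 0) ∧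
    ∫ u in Set.Ioi 0, u ^ (γ-1) * Real.exp (-((k:ℝ) * u)) = (k:ℝ) ^ (-γ) * Real.Gamma γ := by
  have hk' : (0:ℝ) < k := Nat.cast_pos.mpr hk
  constructor
  · have := integrableOn_rpow_mul_exp_neg_mul_rpow (p := 1) (s := γ - 1) (b := (k:ℝ))
      (by linarith) one_pos hk'
    simpa [Real.rpow_one] using this
  · rw [integral_rpow_mul_exp_neg_mul_Ioi hγ hk', one_div, Real.inv_rpow hk'.le,
      ← Real.rpow_neg hk'.le]

lemma kar_heq (γ : ℝ) (q : ℝ[X]) (u : ℝ) :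
    u ^ (γ-1) * q.eval (Real.exp (-u))
      = ∑ k ∈ q.support, q.coeff k * (u ^ (γ-1) * Real.exp (-((k:ℝ) * u))) := by
  rw [kar_eval_repr' q u, Finset.mul_sum]
  exact Finset.sum_congr rfl fun k _ => by ring

lemma kar_integrable_poly (γ : ℝ) (hγ : 0 < γ) (q : ℝ[X]) (hq : q.coeff 0 = 0) :
    IntegrableOn (fun u : ℝ => u ^ (γ-1) * q.eval (Real.exp (-u))) (Set.Ioi 0) := by
  have h1 : IntegrableOn
      (fun u : ℝ => ∑ k ∈ q.support, q.coeff k * (u ^ (γ-1) * Real.exp (-((k:ℝ) * u))))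
      (Set.Ioi 0) :=
    integrable_finset_sum _ fun k hk => ((kar_int_term γ hγ k (kar_supp_pos q hq k hk)).1).const_mul _
  exact h1.congr_fun (fun u _ => (kar_heq γ q u).symm) measurableSet_Ioi

lemma kar_integral_poly (γ : ℝ) (hγ : 0 < γ) (q : ℝ[X]) (hq : q.coeff 0 = 0) :
    ∫ u in Set.Ioi 0, u ^ (γ-1) * q.eval (Real.exp (-u))
      = (∑ k ∈ q.support, q.coeff k * (k:ℝ) ^ (-γ)) * Real.Gamma γ := by
  rw [setIntegral_congr_fun measurableSet_Ioi (fun u _ => kar_heq γ q u),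
    integral_finset_sum _ fun k hk => ((kar_int_term γ hγ k (kar_supp_pos q hq k hk)).1).const_mul _]
  rw [Finset.sum_mul]
  refine Finset.sum_congr rfl fun k hk => ?_
  rw [integral_const_mul, (kar_int_term γ hγ k (kar_supp_pos q hq k hk)).2]
  ring
open Filter MeasureTheory Real Polynomial
noncomputable section

def kramp (a b y : ℝ) : ℝ := max 0 (min 1 ((y - a)/(b - a)))

lemma kramp_nonneg (a b y : ℝ) : 0 ≤ kramp a b y := le_max_left _ _
lemma kramp_le_one (a b y : ℝ) : kramp a b y ≤ 1 := by
  unfold kramp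
  exact max_le zero_le_one (min_le_left _ _)
lemma kramp_of_le (a b y : ℝ) (hy : y ≤ a) (hab : a < b) : kramp a b y = 0 := by
  unfold kramp
  rw [max_eq_left]
  exact min_le_of_right_le (div_nonpos_of_nonpos_of_nonneg (by linarith) (by linarith))
lemma kramp_of_ge (a b y : ℝ) (hy : b ≤ y) (hab : a < b) : kramp a b y = 1 := by
  unfold kramp
  rw [min_eq_left (by rw [le_div_iff₀ (by linarith)]; linarith), max_eq_right zero_le_one]
lemma kramp_cont (a b : ℝ) : Continuous (kramp a b) :=
  continuous_const.max (continuous_const.min (by fun_prop))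

lemma kphi_cont (a b e : ℝ) (he : 0 < e) :
    Continuous (fun y => kramp a b y / max y e) := by
  apply (kramp_cont a b).div (continuous_id.max continuous_const)
  intro y
  exact (lt_of_lt_of_le he (le_max_right y e)).ne'

lemma kphi_eval (a b e : ℝ) (he : 0 < e) (hea : e ≤ a) (hab : a < b) (y : ℝ) (hy : 0 ≤ y) :
    y * (kramp a b y / max y e) = kramp a b y := by
  rcases le_or_gt y e with h | h
  · rcases lt_or_eq_of_le hy with h0 | h0
    · rw [kramp_of_le a b y (h.trans hea) hab]; simp
    · rw [← h0, kramp_of_le a b 0 (le_trans he.le hea) hab]; simp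
  · rw [max_eq_left h.le, mul_div_cancel₀]
    exact (he.trans h).ne'

lemma kar_integral_ind (γ : ℝ) (hγ : 0 < γ) (b : ℝ) (hb : 0 < b) :
    IntegrableOn ((Set.Ioc (0:ℝ) b).indicator (fun u => u ^ (γ-1))) (Set.Ioi 0) ∧
    ∫ u in Set.Ioi 0, (Set.Ioc (0:ℝ) b).indicator (fun u => u ^ (γ-1)) u = b ^ γ / γ := by
  have hint : IntegrableOn (fun u : ℝ => u ^ (γ-1)) (Set.Ioc 0 b) := by
    rw [← intervalIntegrable_iff_integrableOn_Ioc_of_le hb.le]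
    exact intervalIntegral.intervalIntegrable_rpow' (by linarith)
  have hind : Integrable ((Set.Ioc (0:ℝ) b).indicator (fun u => u ^ (γ-1))) :=
    (integrable_indicator_iff measurableSet_Ioc).mpr hint
  refine ⟨hind.integrableOn, ?_⟩
  rw [setIntegral_indicator measurableSet_Ioc,
    show Set.Ioi (0:ℝ) ∩ Set.Ioc 0 b = Set.Ioc 0 b from
      Set.inter_eq_self_of_subset_right Set.Ioc_subset_Ioi_self,
    ← intervalIntegral.integral_of_le hb.le, integral_rpow (Or.inl (by linarith))]
  rw [sub_add_cancel, Real.zero_rpow (by linarith), sub_zero]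

lemma kar_integral_exp (γ : ℝ) (hγ : 0 < γ) :
    IntegrableOn (fun u : ℝ => u ^ (γ-1) * Real.exp (-u)) (Set.Ioi 0) ∧
    ∫ u in Set.Ioi 0, u ^ (γ-1) * Real.exp (-u) = Real.Gamma γ := by
  have := kar_int_term γ hγ 1 one_pos
  simpa using this

/-- Karamata's Tauberian theorem for eigenvalue counting. If
`Σ_n e^{−λ_n t} ∼ A t^{−γ}` as `t → 0⁺`, then `N(λ) = #{n : λ_n ≤ λ}` satisfies
`N(λ) ∼ (A/Γ(γ+1)) λ^γ` as `λ → ∞`. -/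
theorem stmt18 (lam : ℕ → ℝ) (hmono : Monotone lam) (hpos : ∀ n, 0 ≤ lam n)
    (hsum : ∀ t > (0 : ℝ), Summable fun n => Real.exp (-lam n * t))
    (A γ : ℝ) (hA : 0 < A) (hγ : 0 < γ)
    (hasymp : Tendsto (fun t : ℝ => (∑' n, Real.exp (-lam n * t)) * t ^ γ)
      (nhdsWithin 0 (Set.Ioi 0)) (nhds A)) :
    Tendsto (fun x : ℝ => (Nat.card {n : ℕ | lam n ≤ x} : ℝ) / x ^ γ)
      atTop (nhds (A / Real.Gamma (γ + 1))) := by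
  have hΓ : 0 < Real.Gamma γ := Real.Gamma_pos_of_pos hγ
  have hΓ1 : 0 < Real.Gamma (γ + 1) := Real.Gamma_pos_of_pos (by linarith)
  have hΓrec : Real.Gamma (γ + 1) = γ * Real.Gamma γ := Real.Gamma_add_one hγ.ne'
  set C := A / Real.Gamma (γ + 1) with hCdef
  have hfin : ∀ x : ℝ, {n : ℕ | lam n ≤ x}.Finite := fun x =>
    kar_fin lam (by simpa using hsum 1 one_pos) x
  rw [Metric.tendsto_atTop]
  intro ε₀ hε₀
  set c := Real.exp (-1) with hc0
  have hc : 0 < c := Real.exp_pos _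
  have hc1 : c < 1 := by rw [hc0]; exact Real.exp_lt_one_iff.mpr (by norm_num)
  have hchalf : c < 1/2 := by
    have h2 : (2:ℝ) < Real.exp 1 := by
      have := Real.exp_one_gt_d9; nlinarith
    rw [hc0, Real.exp_neg]
    rw [inv_lt_comm₀ (Real.exp_pos 1) (by norm_num)] at *
    · nlinarith
  -- choose ε
  set ε := ε₀ / (8 * A + 8) with hεdef
  have hε : 0 < ε := by positivity
  have hεA : 2 * ε * A < ε₀ / 4 := by
    have h8 : (0:ℝ) < 8 * A + 8 := by linarith
    rw [hεdef, show 2 * (ε₀ / (8 * A + 8)) * A = (2 * A * ε₀) / (8 * A + 8) by ring,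
      div_lt_div_iff₀ h8 (by norm_num)]
    nlinarith
  -- choose δ
  set κ := ε₀ * Real.Gamma (γ + 1) / (4 * A) with hκdef
  have hκ : 0 < κ := by positivity
  have hAκ : A / Real.Gamma (γ + 1) * κ = ε₀ / 4 := by
    rw [hκdef]; field_simp
  have hcont : ContinuousAt (fun d : ℝ => (-Real.log (c + d)) ^ γ) 0 := by
    have h1 : ContinuousAt (fun d : ℝ => -Real.log (c + d)) 0 := by
      exact ((Real.continuousAt_log (by simpa using hc.ne')).comp (by fun_prop)).neg
    exact h1.rpow_const (Or.inr hγ.le)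
  have hval : (-Real.log (c + 0)) ^ γ = 1 := by
    rw [add_zero, hc0, Real.log_exp]; norm_num
  have hev : ∀ᶠ d in nhds (0:ℝ), |(-Real.log (c + d)) ^ γ - 1| < κ := by
    have h := hcont.tendsto
    rw [hval] at h
    have := Metric.tendsto_nhds.mp h κ hκ
    simpa [Real.dist_eq] using this
  have hnegmap : Tendsto (fun d : ℝ => -d) (nhds 0) (nhds (0:ℝ)) := by
    simpa using (continuous_neg.tendsto (0:ℝ))
  have hev' : ∀ᶠ d in nhds (0:ℝ), |(-Real.log (c + -d)) ^ γ - 1| < κ := hnegmap.eventually hev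
  have hsmall : ∀ᶠ d in nhds (0:ℝ), d < c/2 := tendsto_id.eventually_lt_const (by positivity)
  obtain ⟨δ, ⟨⟨hκ₁, hκ₂⟩, hδhalf⟩, (hδ : (0:ℝ) < δ)⟩ :=
    (((((hev.and hev').and hsmall)).filter_mono
      (nhdsWithin_le_nhds (s := Set.Ioi (0:ℝ)))).and self_mem_nhdsWithin).exists
  have hcdpos : 0 < c - δ := by linarith
  have hcd : c - δ < c := by linarith
  have hcd1 : c + δ < 1 := by linarith
  set u₂ := -Real.log (c - δ) with hu₂def
  set u₁ := -Real.log (c + δ) with hu₁def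
  have hu₂pos : 0 < u₂ := by
    rw [hu₂def, neg_pos]
    exact Real.log_neg hcdpos (by linarith)
  have hu₁pos : 0 < u₁ := by
    rw [hu₁def, neg_pos]
    exact Real.log_neg (by linarith) hcd1
  have hexpu₂ : Real.exp (-u₂) = c - δ := by rw [hu₂def, neg_neg, Real.exp_log hcdpos]
  have hexpu₁ : Real.exp (-u₁) = c + δ := by rw [hu₁def, neg_neg, Real.exp_log (by linarith)]
  have hu₂κ : u₂ ^ γ < 1 + κ := by
    rw [show c + -δ = c - δ by ring] at hκ₂
    have := (abs_lt.mp hκ₂).2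
    rw [hu₂def]; linarith
  have hu₁κ : 1 - κ < u₁ ^ γ := by
    have := (abs_lt.mp hκ₁).1
    rw [hu₁def]; linarith
  -- Weierstrass approximations
  obtain ⟨p₂, hp₂⟩ := exists_polynomial_near_of_continuousOn 0 1
    (fun y => kramp (c - δ) c y / max y (c - δ)) ((kphi_cont _ _ _ hcdpos).continuousOn) ε hε
  obtain ⟨p₁, hp₁⟩ := exists_polynomial_near_of_continuousOn 0 1
    (fun y => kramp c (c + δ) y / max y (c - δ)) ((kphi_cont _ _ _ hcdpos).continuousOn) ε hε
  set q₂ := p₂ * Polynomial.X with hq₂def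
  set q₁ := p₁ * Polynomial.X with hq₁def
  have hq₂0 : q₂.coeff 0 = 0 := by rw [hq₂def, Polynomial.mul_coeff_zero]; simp
  have hq₁0 : q₁.coeff 0 = 0 := by rw [hq₁def, Polynomial.mul_coeff_zero]; simp
  have hkey₂ : ∀ y : ℝ, 0 ≤ y → y ≤ 1 → |q₂.eval y - kramp (c - δ) c y| ≤ ε * y := by
    intro y h0 h1
    have h := hp₂ y ⟨h0, h1⟩
    have heval : q₂.eval y = y * p₂.eval y := by rw [hq₂def]; simp [mul_comm]
    rw [heval, ← kphi_eval (c - δ) c (c - δ) hcdpos le_rfl hcd y h0, ← mul_sub, abs_mul,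
      abs_of_nonneg h0]
    calc y * |p₂.eval y - kramp (c - δ) c y / max y (c - δ)| ≤ y * ε :=
          mul_le_mul_of_nonneg_left h.le h0
      _ = ε * y := mul_comm _ _
  have hkey₁ : ∀ y : ℝ, 0 ≤ y → y ≤ 1 → |q₁.eval y - kramp c (c + δ) y| ≤ ε * y := by
    intro y h0 h1
    have h := hp₁ y ⟨h0, h1⟩
    have heval : q₁.eval y = y * p₁.eval y := by rw [hq₁def]; simp [mul_comm]
    rw [heval, ← kphi_eval c (c + δ) (c - δ) hcdpos hcd.le (by linarith) y h0, ← mul_sub, abs_mul,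
      abs_of_nonneg h0]
    calc y * |p₁.eval y - kramp c (c + δ) y / max y (c - δ)| ≤ y * ε :=
          mul_le_mul_of_nonneg_left h.le h0
      _ = ε * y := mul_comm _ _
  -- pointwise facts about y_n
  have hy_facts : ∀ (t : ℝ), 0 < t → ∀ n : ℕ,
      0 ≤ Real.exp (-lam n * t) ∧ Real.exp (-lam n * t) ≤ 1 := by
    intro t ht n
    refine ⟨(Real.exp_pos _).le, ?_⟩
    rw [← Real.exp_zero]
    exact Real.exp_le_exp.mpr (by nlinarith [hpos n, ht.le])
  -- upper tsum chain
  have hub : ∀ t : ℝ, 0 < t → (Nat.card {n : ℕ | lam n ≤ t⁻¹} : ℝ)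
      ≤ (∑ k ∈ q₂.support, q₂.coeff k * ∑' n, Real.exp (-lam n * (k * t)))
        + ε * ∑' n, Real.exp (-lam n * t) := by
    intro t ht
    rw [kar_card lam t⁻¹ (hfin t⁻¹), ← kar_tsum_poly lam hsum q₂ hq₂0 ht, ← tsum_mul_left,
      ← Summable.tsum_add (kar_summable_poly lam hsum q₂ hq₂0 ht) ((hsum t ht).mul_left ε)]
    refine Summable.tsum_le_tsum (fun n => ?_)
      (summable_of_ne_finset_zero (s := (hfin t⁻¹).toFinset) fun n hn => ?_)
      ((kar_summable_poly lam hsum q₂ hq₂0 ht).add ((hsum t ht).mul_left ε))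
    · obtain ⟨hy0, hy1⟩ := hy_facts t ht n
      have hk := abs_le.mp (hkey₂ (Real.exp (-lam n * t)) hy0 hy1)
      by_cases hl : lam n ≤ t⁻¹
      · simp only [if_pos hl]
        have hyc : c ≤ Real.exp (-lam n * t) := by
          rw [hc0]
          refine Real.exp_le_exp.mpr ?_
          have : lam n * t ≤ 1 := by
            calc lam n * t ≤ t⁻¹ * t := by nlinarith
              _ = 1 := inv_mul_cancel₀ ht.ne'
          nlinarith
        rw [kramp_of_ge _ _ _ hyc hcd] at hk
        linarith [hk.1]
      · simp only [if_neg hl]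
        have := kramp_nonneg (c - δ) c (Real.exp (-lam n * t))
        linarith [hk.1]
    · simp only [Set.Finite.mem_toFinset, Set.mem_setOf_eq] at hn
      simp [hn]
  -- lower tsum chain
  have hlb : ∀ t : ℝ, 0 < t →
      (∑ k ∈ q₁.support, q₁.coeff k * ∑' n, Real.exp (-lam n * (k * t)))
        - ε * ∑' n, Real.exp (-lam n * t) ≤ (Nat.card {n : ℕ | lam n ≤ t⁻¹} : ℝ) := by
    intro t ht
    rw [kar_card lam t⁻¹ (hfin t⁻¹), ← kar_tsum_poly lam hsum q₁ hq₁0 ht, ← tsum_mul_left,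
      ← Summable.tsum_sub (kar_summable_poly lam hsum q₁ hq₁0 ht) ((hsum t ht).mul_left ε)]
    refine Summable.tsum_le_tsum (fun n => ?_)
      ((kar_summable_poly lam hsum q₁ hq₁0 ht).sub ((hsum t ht).mul_left ε))
      (summable_of_ne_finset_zero (s := (hfin t⁻¹).toFinset) fun n hn => ?_)
    · obtain ⟨hy0, hy1⟩ := hy_facts t ht n
      have hk := abs_le.mp (hkey₁ (Real.exp (-lam n * t)) hy0 hy1)
      by_cases hl : lam n ≤ t⁻¹
      · simp only [if_pos hl]
        have := kramp_le_one c (c + δ) (Real.exp (-lam n * t))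
        linarith [hk.2]
      · simp only [if_neg hl]
        have hyc : Real.exp (-lam n * t) ≤ c := by
          rw [hc0]
          refine Real.exp_le_exp.mpr ?_
          push_neg at hl
          have : 1 ≤ lam n * t := by
            calc (1:ℝ) = t⁻¹ * t := (inv_mul_cancel₀ ht.ne').symm
              _ ≤ lam n * t := by nlinarith
          nlinarith
        rw [kramp_of_le _ _ _ hyc (by linarith)] at hk
        linarith [hk.2]
    · simp only [Set.Finite.mem_toFinset, Set.mem_setOf_eq] at hn
      simp [hn]
  -- limits
  have hlim₂ : Tendsto (fun t : ℝ =>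
      ((∑ k ∈ q₂.support, q₂.coeff k * ∑' n, Real.exp (-lam n * (k * t)))
        + ε * ∑' n, Real.exp (-lam n * t)) * t ^ γ)
      (nhdsWithin 0 (Set.Ioi 0))
      (nhds (A * (∑ k ∈ q₂.support, q₂.coeff k * (k:ℝ) ^ (-γ)) + ε * A)) := by
    have h1 := kar_polylim lam A γ hγ hasymp q₂.support (kar_supp_pos q₂ hq₂0) q₂.coeff
    have h2 := hasymp.const_mul ε
    exact (h1.add h2).congr fun t => by ring
  have hlim₁ : Tendsto (fun t : ℝ =>
      ((∑ k ∈ q₁.support, q₁.coeff k * ∑' n, Real.exp (-lam n * (k * t)))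
        - ε * ∑' n, Real.exp (-lam n * t)) * t ^ γ)
      (nhdsWithin 0 (Set.Ioi 0))
      (nhds (A * (∑ k ∈ q₁.support, q₁.coeff k * (k:ℝ) ^ (-γ)) - ε * A)) := by
    have h1 := kar_polylim lam A γ hγ hasymp q₁.support (kar_supp_pos q₁ hq₁0) q₁.coeff
    have h2 := hasymp.const_mul ε
    exact (h1.sub h2).congr fun t => by ring
  -- integral bound, upper
  have hcv₂ : (∑ k ∈ q₂.support, q₂.coeff k * (k:ℝ) ^ (-γ)) * Real.Gamma γ
      ≤ u₂ ^ γ / γ + ε * Real.Gamma γ := by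
    rw [← kar_integral_poly γ hγ q₂ hq₂0]
    have hR : IntegrableOn (fun u : ℝ =>
        (Set.Ioc (0:ℝ) u₂).indicator (fun u => u ^ (γ-1)) u + ε * (u ^ (γ-1) * Real.exp (-u)))
        (Set.Ioi 0) :=
      (kar_integral_ind γ hγ u₂ hu₂pos).1.add ((kar_integral_exp γ hγ).1.const_mul ε)
    have hmono' : ∫ u in Set.Ioi 0, u ^ (γ-1) * q₂.eval (Real.exp (-u))
        ≤ ∫ u in Set.Ioi 0, ((Set.Ioc (0:ℝ) u₂).indicator (fun u => u ^ (γ-1)) u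
            + ε * (u ^ (γ-1) * Real.exp (-u))) := by
      refine setIntegral_mono_on (kar_integrable_poly γ hγ q₂ hq₂0) hR measurableSet_Ioi ?_
      intro u hu
      have h0u : (0:ℝ) < u := hu
      have hy0 : (0:ℝ) ≤ Real.exp (-u) := (Real.exp_pos _).le
      have hy1 : Real.exp (-u) ≤ 1 := by
        rw [← Real.exp_zero]; exact Real.exp_le_exp.mpr (by linarith)
      have hk := (abs_le.mp (hkey₂ (Real.exp (-u)) hy0 hy1)).2
      have hupow : (0:ℝ) ≤ u ^ (γ-1) := Real.rpow_nonneg h0u.le _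
      have hrampb : kramp (c - δ) c (Real.exp (-u)) * u ^ (γ-1)
          ≤ (Set.Ioc (0:ℝ) u₂).indicator (fun u => u ^ (γ-1)) u := by
        rcases le_or_gt u u₂ with h | h
        · rw [Set.indicator_of_mem (Set.mem_Ioc.mpr ⟨h0u, h⟩)]
          nlinarith [kramp_le_one (c - δ) c (Real.exp (-u)), kramp_nonneg (c - δ) c (Real.exp (-u))]
        · rw [Set.indicator_of_notMem (fun hmem => absurd (Set.mem_Ioc.mp hmem).2 (not_le.mpr h)),
            kramp_of_le _ _ _ (by rw [← hexpu₂]; exact Real.exp_le_exp.mpr (by linarith)) hcd,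
            zero_mul]
      nlinarith [mul_le_mul_of_nonneg_right hk hupow]
    refine hmono'.trans ?_
    rw [integral_add (kar_integral_ind γ hγ u₂ hu₂pos).1 ((kar_integral_exp γ hγ).1.const_mul ε),
      (kar_integral_ind γ hγ u₂ hu₂pos).2, integral_const_mul, (kar_integral_exp γ hγ).2]
  -- integral bound, lower
  have hcv₁ : u₁ ^ γ / γ - ε * Real.Gamma γ
      ≤ (∑ k ∈ q₁.support, q₁.coeff k * (k:ℝ) ^ (-γ)) * Real.Gamma γ := by
    rw [← kar_integral_poly γ hγ q₁ hq₁0]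
    have hL : IntegrableOn (fun u : ℝ =>
        (Set.Ioc (0:ℝ) u₁).indicator (fun u => u ^ (γ-1)) u - ε * (u ^ (γ-1) * Real.exp (-u)))
        (Set.Ioi 0) :=
      (kar_integral_ind γ hγ u₁ hu₁pos).1.sub ((kar_integral_exp γ hγ).1.const_mul ε)
    have hmono' : ∫ u in Set.Ioi 0, ((Set.Ioc (0:ℝ) u₁).indicator (fun u => u ^ (γ-1)) u
            - ε * (u ^ (γ-1) * Real.exp (-u)))
        ≤ ∫ u in Set.Ioi 0, u ^ (γ-1) * q₁.eval (Real.exp (-u)) := by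
      refine setIntegral_mono_on hL (kar_integrable_poly γ hγ q₁ hq₁0) measurableSet_Ioi ?_
      intro u hu
      have h0u : (0:ℝ) < u := hu
      have hy0 : (0:ℝ) ≤ Real.exp (-u) := (Real.exp_pos _).le
      have hy1 : Real.exp (-u) ≤ 1 := by
        rw [← Real.exp_zero]; exact Real.exp_le_exp.mpr (by linarith)
      have hk := (abs_le.mp (hkey₁ (Real.exp (-u)) hy0 hy1)).1
      have hupow : (0:ℝ) ≤ u ^ (γ-1) := Real.rpow_nonneg h0u.le _
      have hrampb : (Set.Ioc (0:ℝ) u₁).indicator (fun u => u ^ (γ-1)) u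
          ≤ kramp c (c + δ) (Real.exp (-u)) * u ^ (γ-1) := by
        rcases le_or_gt u u₁ with h | h
        · rw [Set.indicator_of_mem (Set.mem_Ioc.mpr ⟨h0u, h⟩),
            kramp_of_ge _ _ _ (by rw [← hexpu₁]; exact Real.exp_le_exp.mpr (by linarith))
              (by linarith), one_mul]
        · rw [Set.indicator_of_notMem (fun hmem => absurd (Set.mem_Ioc.mp hmem).2 (not_le.mpr h))]
          exact mul_nonneg (kramp_nonneg _ _ _) hupow
      nlinarith [mul_le_mul_of_nonneg_right hk hupow]
    refine le_trans ?_ hmono'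
    rw [integral_sub (kar_integral_ind γ hγ u₁ hu₁pos).1 ((kar_integral_exp γ hγ).1.const_mul ε),
      (kar_integral_ind γ hγ u₁ hu₁pos).2, integral_const_mul, (kar_integral_exp γ hγ).2]
  -- numeric bound, upper
  have hM₂ : A * (∑ k ∈ q₂.support, q₂.coeff k * (k:ℝ) ^ (-γ)) + ε * A < C + ε₀/2 := by
    set cv₂ := ∑ k ∈ q₂.support, q₂.coeff k * (k:ℝ) ^ (-γ) with hcvdef
    have h := mul_le_mul_of_nonneg_left hcv₂ (by positivity : (0:ℝ) ≤ A * γ)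
    have e1 : A * γ * (cv₂ * Real.Gamma γ) ≤ A * u₂ ^ γ + A * γ * (ε * Real.Gamma γ) := by
      refine h.trans (le_of_eq ?_)
      field_simp
    have e2 : A * u₂ ^ γ < A + A * κ := by nlinarith
    have e3 : A * κ = ε₀ * Real.Gamma (γ + 1) / 4 := by rw [hκdef]; field_simp
    have e4 : 2 * ε * A * Real.Gamma (γ + 1) < ε₀ / 4 * Real.Gamma (γ + 1) :=
      mul_lt_mul_of_pos_right hεA hΓ1
    have hCG : C * Real.Gamma (γ + 1) = A := by rw [hCdef]; field_simp
    have target' : (A * cv₂ + ε * A) * Real.Gamma (γ + 1) < (C + ε₀/2) * Real.Gamma (γ + 1) := by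
      have hexp : (A * cv₂ + ε * A) * Real.Gamma (γ + 1)
          = A * γ * (cv₂ * Real.Gamma γ) + ε * A * (γ * Real.Gamma γ) := by
        rw [hΓrec]; ring
      have hexp2 : (C + ε₀/2) * Real.Gamma (γ + 1)
          = C * Real.Gamma (γ + 1) + ε₀/2 * Real.Gamma (γ + 1) := by ring
      have hG2 : ε * A * (γ * Real.Gamma γ) = ε * A * Real.Gamma (γ + 1) := by rw [← hΓrec]
      have hG3 : A * γ * (ε * Real.Gamma γ) = ε * A * Real.Gamma (γ + 1) := by
        rw [← hG2]; ring
      rw [hexp, hexp2, hG2, hCG]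
      rw [hG3] at e1
      linarith
    exact lt_of_mul_lt_mul_right target' hΓ1.le
  -- numeric bound, lower
  have hM₁ : C - ε₀/2 < A * (∑ k ∈ q₁.support, q₁.coeff k * (k:ℝ) ^ (-γ)) - ε * A := by
    set cv₁ := ∑ k ∈ q₁.support, q₁.coeff k * (k:ℝ) ^ (-γ) with hcvdef
    have h := mul_le_mul_of_nonneg_left hcv₁ (by positivity : (0:ℝ) ≤ A * γ)
    have e1 : A * u₁ ^ γ - A * γ * (ε * Real.Gamma γ) ≤ A * γ * (cv₁ * Real.Gamma γ) := by
      refine le_trans (le_of_eq ?_) h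
      field_simp
    have e2 : A - A * κ < A * u₁ ^ γ := by nlinarith
    have e3 : A * κ = ε₀ * Real.Gamma (γ + 1) / 4 := by rw [hκdef]; field_simp
    have e4 : 2 * ε * A * Real.Gamma (γ + 1) < ε₀ / 4 * Real.Gamma (γ + 1) :=
      mul_lt_mul_of_pos_right hεA hΓ1
    have hCG : C * Real.Gamma (γ + 1) = A := by rw [hCdef]; field_simp
    have target' : (C - ε₀/2) * Real.Gamma (γ + 1)
        < (A * cv₁ - ε * A) * Real.Gamma (γ + 1) := by
      have hexp : (A * cv₁ - ε * A) * Real.Gamma (γ + 1)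
          = A * γ * (cv₁ * Real.Gamma γ) - ε * A * (γ * Real.Gamma γ) := by
        rw [hΓrec]; ring
      have hexp2 : (C - ε₀/2) * Real.Gamma (γ + 1)
          = C * Real.Gamma (γ + 1) - ε₀/2 * Real.Gamma (γ + 1) := by ring
      have hG2 : ε * A * (γ * Real.Gamma γ) = ε * A * Real.Gamma (γ + 1) := by rw [← hΓrec]
      have hG3 : A * γ * (ε * Real.Gamma γ) = ε * A * Real.Gamma (γ + 1) := by
        rw [← hG2]; ring
      rw [hexp, hexp2, hG2, hCG]
      rw [hG3] at e1
      linarith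
    exact lt_of_mul_lt_mul_right target' hΓ1.le
  -- transfer to atTop
  have hub_ev := hlim₂.eventually_lt_const hM₂
  have hlb_ev := hlim₁.eventually_const_lt hM₁
  have hmap : Tendsto (fun x : ℝ => x⁻¹) atTop (nhdsWithin (0:ℝ) (Set.Ioi 0)) :=
    tendsto_inv_atTop_nhdsGT_zero
  obtain ⟨X, hX⟩ := eventually_atTop.mp
    (((hmap.eventually hub_ev).and (hmap.eventually hlb_ev)).and (eventually_gt_atTop 0))
  refine ⟨X, fun x hx => ?_⟩
  obtain ⟨⟨hupx, hlox⟩, hx0⟩ := hX x hx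
  have ht : (0:ℝ) < x⁻¹ := inv_pos.mpr hx0
  have hN2 := hub x⁻¹ ht
  have hN1 := hlb x⁻¹ ht
  rw [inv_inv] at hN1 hN2
  have htpow : (0:ℝ) ≤ (x⁻¹) ^ γ := Real.rpow_nonneg ht.le γ
  have hfin2 : (Nat.card {n : ℕ | lam n ≤ x} : ℝ) * (x⁻¹) ^ γ < C + ε₀/2 :=
    lt_of_le_of_lt (mul_le_mul_of_nonneg_right hN2 htpow) hupx
  have hfin1 : C - ε₀/2 < (Nat.card {n : ℕ | lam n ≤ x} : ℝ) * (x⁻¹) ^ γ :=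
    lt_of_lt_of_le hlox (mul_le_mul_of_nonneg_right hN1 htpow)
  have hdiv : (Nat.card {n : ℕ | lam n ≤ x} : ℝ) / x ^ γ
      = (Nat.card {n : ℕ | lam n ≤ x} : ℝ) * (x⁻¹) ^ γ := by
    rw [Real.inv_rpow hx0.le, div_eq_mul_inv]
  rw [Real.dist_eq, hdiv, abs_lt]
  constructor <;> linarith
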